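/- Let E be a Banach space whose dual X = E* is norm-separable, and let T : X → X be a map that is norm-continuous and weak*-weak*-continuous (not necessarily linear). Then T is AP_b-hypercyclic if and only if T is hypercyclic and has dense small periodic sets. -/

import Mathlib

open NormedSpace

/-- A set `A ⊆ ℕ` belongs to the family `AP_b` if it contains arbitrarily long
arithmetic progressions with some fixed common difference `k ≥ 1`. -/
def APb (A : Set ℕ) : Prop :=
  ∃ k : ℕ, 1 ≤ k ∧ ∀ m : ℕ, ∃ a : ℕ, ∀ j : ℕ, j ≤ m → a + j * k ∈ A

/-- Let `E` be a Banach space whose dual `X = E*` is norm-separable,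
and let `T : X → X` be norm-continuous and weak*-weak*-continuous (not necessarily
linear). Then `T` is `AP_b`-hypercyclic if and only if `T` is hypercyclic and has
dense small periodic sets. -/
theorem APb_hypercyclic_iff_hypercyclic_and_denseSmallPeriodicSets
    {E : Type*} [NormedAddCommGroup E] [NormedSpace ℝ E] [CompleteSpace E]
    [TopologicalSpace.SeparableSpace (StrongDual ℝ E)]
    (T : StrongDual ℝ E → StrongDual ℝ E)
    (hTn : Continuous T)
    (hTw : Continuous fun φ : WeakDual ℝ E =>
      StrongDual.toWeakDual (T (StrongDual.toWeakDual.symm φ))) :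
    (∃ x : StrongDual ℝ E, ∀ U : Set (StrongDual ℝ E), IsOpen U → U.Nonempty →
      APb {n : ℕ | T^[n] x ∈ U}) ↔
    ((∃ x : StrongDual ℝ E, Dense (Set.range fun n : ℕ => T^[n] x)) ∧
      (∀ U : Set (StrongDual ℝ E), IsOpen U → U.Nonempty →
        ∃ Y : Set (StrongDual ℝ E), Y.Nonempty ∧ IsClosed Y ∧ Y ⊆ U ∧
          ∃ k : ℕ, 1 ≤ k ∧ T^[k] '' Y ⊆ Y)) := by
  constructor
  · rintro ⟨x, hx⟩
    constructor
    · -- hypercyclicity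
      refine ⟨x, ?_⟩
      rw [dense_iff_inter_open]
      intro U hU hUne
      obtain ⟨k, -, hA⟩ := hx U hU hUne
      obtain ⟨a, ha⟩ := hA 0
      have h0 := ha 0 le_rfl
      simp only [Nat.zero_mul, Nat.add_zero, Set.mem_setOf_eq] at h0
      exact ⟨T^[a] x, h0, a, rfl⟩
    · -- dense small periodic sets
      intro U hU hUne
      obtain ⟨u, hu⟩ := hUne
      obtain ⟨ε, hε, hball⟩ := Metric.isOpen_iff.mp hU u hu
      have hcb : Metric.closedBall u (ε / 2) ⊆ U :=
        (Metric.closedBall_subset_ball (by linarith)).trans hball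
      obtain ⟨k, hk, hA⟩ := hx (Metric.ball u (ε / 2)) Metric.isOpen_ball
        ⟨u, Metric.mem_ball_self (by linarith)⟩
      choose a ha using hA
      set ι : StrongDual ℝ E → WeakDual ℝ E := fun z => StrongDual.toWeakDual z with hι
      set Tw : WeakDual ℝ E → WeakDual ℝ E :=
        fun φ => StrongDual.toWeakDual (T (StrongDual.toWeakDual.symm φ)) with hTwdef
      have hsemi : ∀ z, Tw (ι z) = ι (T z) := fun z =>
        congrArg StrongDual.toWeakDual (congrArg T (StrongDual.toWeakDual.symm_apply_apply z))
      have hit : ∀ n z, Tw^[n] (ι z) = ι (T^[n] z) := by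
        intro n
        induction n with
        | zero => intro z; simp
        | succ n ihn =>
          intro z
          rw [Function.iterate_succ_apply, hsemi, ihn, ← Function.iterate_succ_apply]
      set S : ℕ → Set (WeakDual ℝ E) := fun N =>
        {φ | ∃ m j : ℕ, N ≤ j ∧ j + N ≤ m ∧ φ = ι (T^[a m + j * k] x)} with hS
      set K : Set (WeakDual ℝ E) := WeakDual.toStrongDual ⁻¹' Metric.closedBall u (ε / 2)
        with hK
      have hKc : IsCompact K := WeakDual.isCompact_closedBall u (ε / 2)
      have hmemK : ∀ z : StrongDual ℝ E, z ∈ Metric.closedBall u (ε / 2) → ι z ∈ K := by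
        intro z hz
        have : WeakDual.toStrongDual (ι z) = z := StrongDual.toWeakDual.symm_apply_apply z
        simpa [hK, Set.mem_preimage, this] using hz
      have hSK : ∀ N, S N ⊆ K := by
        rintro N φ ⟨m, j, hNj, hjm, rfl⟩
        exact hmemK _ (Metric.ball_subset_closedBall
          (ha m j (le_trans (Nat.le_add_right j N) hjm)))
      set C : ℕ → Set (WeakDual ℝ E) := fun N => closure (S N) with hC
      have hCK : ∀ N, C N ⊆ K := fun N => closure_minimal (hSK N) hKc.isClosed
      have hCcomp : ∀ N, IsCompact (C N) :=
        fun N => hKc.of_isClosed_subset isClosed_closure (hCK N)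
      have hCnest : ∀ N, C (N + 1) ⊆ C N := by
        intro N
        apply closure_mono
        rintro φ ⟨m, j, hNj, hjm, rfl⟩
        exact ⟨m, j, by omega, by omega, rfl⟩
      have hCne : ∀ N, (C N).Nonempty := by
        intro N
        exact ⟨ι (T^[a (N + N) + N * k] x),
          subset_closure ⟨N + N, N, le_rfl, le_rfl, rfl⟩⟩
      have hYw : (⋂ N, C N).Nonempty :=
        IsCompact.nonempty_iInter_of_sequence_nonempty_isCompact_isClosed C hCnest hCne
          (hCcomp 0) (fun N => isClosed_closure)
      have hTwcont : Continuous Tw := hTw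
      have hstep : ∀ N, Tw^[k] '' C (N + 1) ⊆ C N := by
        intro N
        have h1 : Tw^[k] '' S (N + 1) ⊆ S N := by
          rintro φ ⟨ψ, ⟨m, j, hNj, hjm, rfl⟩, rfl⟩
          refine ⟨m, j + 1, by omega, by omega, ?_⟩
          rw [hit]
          congr 1
          rw [← Function.iterate_add_apply]
          congr 1
          ring
        calc Tw^[k] '' closure (S (N + 1))
            ⊆ closure (Tw^[k] '' S (N + 1)) :=
              image_closure_subset_closure_image (hTwcont.iterate k)
          _ ⊆ closure (S N) := closure_mono h1
      refine ⟨{z : StrongDual ℝ E | ∀ N, ι z ∈ C N}, ?_, ?_, ?_, k, hk, ?_⟩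
      · obtain ⟨φ, hφ⟩ := hYw
        refine ⟨StrongDual.toWeakDual.symm φ, fun N => ?_⟩
        have : ι (StrongDual.toWeakDual.symm φ) = φ := StrongDual.toWeakDual.apply_symm_apply φ
        rw [this]
        exact Set.mem_iInter.mp hφ N
      · have : {z : StrongDual ℝ E | ∀ N, ι z ∈ C N} = ⋂ N, ι ⁻¹' C N := by
          ext z; simp [Set.mem_iInter]
        rw [this]
        exact isClosed_iInter fun N =>
          IsClosed.preimage Dual.toWeakDual_continuous isClosed_closure
      · intro z hz
        have hzK : ι z ∈ K := hCK 0 (hz 0)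
        have : WeakDual.toStrongDual (ι z) = z := StrongDual.toWeakDual.symm_apply_apply z
        have hzb : z ∈ Metric.closedBall u (ε / 2) := by
          rw [hK] at hzK
          simpa [this] using hzK
        exact hcb hzb
      · rintro φ ⟨z, hz, rfl⟩ N
        have : ι (T^[k] z) = Tw^[k] (ι z) := (hit k z).symm
        rw [this]
        exact hstep N ⟨ι z, hz (N + 1), rfl⟩
  · rintro ⟨⟨x, hx⟩, hper⟩
    refine ⟨x, fun U hU hUne => ?_⟩
    obtain ⟨Y, ⟨y, hy⟩, hYc, hYU, k, hk, hTk⟩ := hper U hU hUne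
    refine ⟨k, hk, fun m => ?_⟩
    have hyj : ∀ j : ℕ, T^[j * k] y ∈ Y := by
      intro j
      induction j with
      | zero => simpa using hy
      | succ j ihj =>
        have : T^[(j + 1) * k] y = T^[k] (T^[j * k] y) := by
          rw [← Function.iterate_add_apply]
          congr 1
          ring
        rw [this]
        exact hTk ⟨T^[j * k] y, ihj, rfl⟩
    set W : Set (StrongDual ℝ E) := ⋂ j ∈ Finset.range (m + 1), T^[j * k] ⁻¹' U with hW
    have hWo : IsOpen W :=
      isOpen_biInter_finset fun j _ => hU.preimage (hTn.iterate (j * k))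
    have hyW : y ∈ W := by
      rw [hW]
      simp only [Set.mem_iInter, Set.mem_preimage]
      intro j _
      exact hYU (hyj j)
    obtain ⟨z, ⟨n, rfl⟩, hzW⟩ := hx.exists_mem_open hWo ⟨y, hyW⟩
    refine ⟨n, fun j hj => ?_⟩
    have : T^[n + j * k] x = T^[j * k] (T^[n] x) := by
      rw [add_comm, Function.iterate_add_apply]
    rw [Set.mem_setOf_eq, this]
    rw [hW] at hzW
    simp only [Set.mem_iInter, Set.mem_preimage] at hzW
    exact hzW j (Finset.mem_range.mpr (Nat.lt_succ_of_le hj))
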